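/- Let T_1(y) = y + α (mod 1) be the rotation of the circle S = ℝ/ℤ and T_2 = T_{α,β,δ} the double rotation, with α, β irrational, 0 < β < min(δ, 1 − δ), and δ ∈ (0,1). Then for every nonempty open arc A ⊆ S there exists a finite itinerary J = (j_1, …, j_k) ∈ {1,2}^k such that T_J(S) := (T_{j_1} ∘ … ∘ T_{j_k})(S) ⊆ A. -/

import Mathlib

open MeasureTheory Topology Filter Set

/-- The rigid rotation `T₁(y) = y + α (mod 1)` of the circle `S = ℝ/ℤ`. -/
noncomputable def rigidRot (a : ℝ) : AddCircle (1 : ℝ) → AddCircle (1 : ℝ) :=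
  fun y => y + (a : AddCircle (1 : ℝ))

/-- The double rotation `T_{α,β,δ}` of the circle `S = ℝ/ℤ`:
`x ↦ x + α + β (mod 1)` if `x ≤ δ` and `x ↦ x + α (mod 1)` if `x > δ`,
where `x` is identified with its representative in `[0,1)`. -/
noncomputable def doubleRot (a b dl : ℝ) : AddCircle (1 : ℝ) → AddCircle (1 : ℝ) :=
  fun x =>
    if ((AddCircle.equivIco 1 0 x : ℝ)) ≤ dl then x + ((a + b : ℝ) : AddCircle (1 : ℝ))
    else x + (a : AddCircle (1 : ℝ))

/-- `T_J = T_{j_1} ∘ … ∘ T_{j_k}` for a finite itinerary `J = (j_1, …, j_k)` in `{1,2}^k`;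
here the letter `true` stands for the rigid rotation `T₁` and `false` for the double
rotation `T₂ = T_{α,β,δ}`. -/
noncomputable def applyWord (a b dl : ℝ) : List Bool → AddCircle (1 : ℝ) → AddCircle (1 : ℝ)
  | [] => id
  | j :: J => (cond j (rigidRot a) (doubleRot a b dl)) ∘ applyWord a b dl J


namespace CWIA

noncomputable def ιc : ℝ → AddCircle (1:ℝ) := fun x => (x : AddCircle (1:ℝ))

lemma ιc_add_int (x : ℝ) (m : ℤ) : ιc (x + m) = ιc x := by
  show ((x + (m:ℝ) : ℝ) : AddCircle (1:ℝ)) = ((x:ℝ) : AddCircle (1:ℝ))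
  rw [QuotientAddGroup.eq_iff_sub_mem]
  refine ⟨m, by simp⟩

lemma ιc_add (x y : ℝ) : ιc (x + y) = ιc x + ((y : ℝ) : AddCircle (1:ℝ)) :=
  AddCircle.coe_add 1 x y

lemma rep_coe {x : ℝ} (hx : x ∈ Set.Ico (0:ℝ) 1) :
    ((AddCircle.equivIco 1 0 (ιc x)) : ℝ) = x := by
  show ((QuotientAddGroup.equivIcoMod (by norm_num : (0:ℝ) < 1) 0 (↑x)) : ℝ) = x
  rw [QuotientAddGroup.equivIcoMod_coe]
  exact (toIcoMod_eq_self _).2 (by simpa using hx)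

lemma coe_surj (q : AddCircle (1:ℝ)) : ∃ x ∈ Set.Ico (0:ℝ) 1, ιc x = q := by
  refine ⟨(AddCircle.equivIco 1 0 q : ℝ), by simpa using (AddCircle.equivIco 1 0 q).2, ?_⟩
  show (AddCircle.equivIco 1 0).symm (AddCircle.equivIco 1 0 q) = q
  exact (AddCircle.equivIco 1 0).symm_apply_apply q

lemma doubleRot_coe (a b dl : ℝ) {x : ℝ} (hx : x ∈ Set.Ico (0:ℝ) 1) :
    doubleRot a b dl (ιc x) = if x ≤ dl then ιc (x + (a+b)) else ιc (x + a) := by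
  unfold doubleRot
  rw [rep_coe hx]
  split <;> rw [ιc_add]

lemma rigidRot_coe (a : ℝ) (x : ℝ) : rigidRot a (ιc x) = ιc (x + a) := by
  unfold rigidRot; rw [ιc_add]

def GoodW (a b dl : ℝ) (s : Set ℝ) : Prop :=
  ∃ J : List Bool, Set.range (applyWord a b dl J) ⊆ ιc '' s

variable {a b dl : ℝ}

lemma good_mono {s t : Set ℝ} (hst : s ⊆ t) (h : GoodW a b dl s) : GoodW a b dl t := by
  obtain ⟨J, hJ⟩ := h
  exact ⟨J, hJ.trans (Set.image_mono hst)⟩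

lemma good_sub {s t : Set ℝ} (hsub : ∀ x ∈ s, ∃ y ∈ t, ιc y = ιc x) (h : GoodW a b dl s) :
    GoodW a b dl t := by
  obtain ⟨J, hJ⟩ := h
  refine ⟨J, hJ.trans ?_⟩
  rintro z ⟨x, hx, rfl⟩
  obtain ⟨y, hy, e⟩ := hsub x hx
  exact ⟨y, hy, e⟩

lemma good_congr {s t : Set ℝ} (hst : ιc '' s = ιc '' t) (h : GoodW a b dl s) :
    GoodW a b dl t := by
  obtain ⟨J, hJ⟩ := h
  exact ⟨J, by rw [← hst]; exact hJ⟩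

lemma good_nil : GoodW a b dl (Set.Ico 0 1) := by
  refine ⟨[], ?_⟩
  rintro z ⟨q, rfl⟩
  obtain ⟨x, hx, e⟩ := coe_surj (applyWord a b dl [] q)
  exact ⟨x, hx, e⟩

lemma good_rot {s : Set ℝ} (h : GoodW a b dl s) : GoodW a b dl ((fun x => x + a) '' s) := by
  obtain ⟨J, hJ⟩ := h
  refine ⟨true :: J, ?_⟩
  rintro z ⟨q, rfl⟩
  have : applyWord a b dl (true :: J) q = rigidRot a (applyWord a b dl J q) := rfl
  rw [this]
  obtain ⟨x, hx, e⟩ := hJ ⟨q, rfl⟩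
  refine ⟨x + a, ⟨x, hx, rfl⟩, ?_⟩
  rw [← rigidRot_coe, e]

lemma good_step {s : Set ℝ} (h : GoodW a b dl s) (hs : s ⊆ Set.Ico 0 1) :
    GoodW a b dl ((fun x => x + (a+b)) '' (s ∩ Set.Iic dl) ∪ (fun x => x + a) '' (s ∩ Set.Ioi dl)) := by
  obtain ⟨J, hJ⟩ := h
  refine ⟨false :: J, ?_⟩
  rintro z ⟨q, rfl⟩
  have hz : applyWord a b dl (false :: J) q = doubleRot a b dl (applyWord a b dl J q) := rfl
  rw [hz]
  obtain ⟨x, hx, e⟩ := hJ ⟨q, rfl⟩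
  rw [← e, doubleRot_coe a b dl (hs hx)]
  by_cases hxd : x ≤ dl
  · rw [if_pos hxd]
    exact ⟨x + (a+b), Or.inl ⟨x, ⟨hx, hxd⟩, rfl⟩, rfl⟩
  · rw [if_neg hxd]
    exact ⟨x + a, Or.inr ⟨x, ⟨hx, lt_of_not_ge hxd⟩, rfl⟩, rfl⟩

lemma image_coe_shift (m : ℤ) (s : Set ℝ) : ιc '' ((fun x => x + (m:ℝ)) '' s) = ιc '' s := by
  rw [Set.image_image]
  exact Set.image_congr fun x _ => ιc_add_int x m

lemma good_int (m : ℤ) {s : Set ℝ} (h : GoodW a b dl s) :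
    GoodW a b dl ((fun x => x + (m:ℝ)) '' s) :=
  good_congr (image_coe_shift m s).symm h

lemma good_rotN (n : ℕ) {s : Set ℝ} (h : GoodW a b dl s) :
    GoodW a b dl ((fun x => x + n * a) '' s) := by
  induction n with
  | zero => simpa using h
  | succ n ih =>
    have := good_rot ih
    rw [Set.image_image] at this
    have e : (fun x => x + (n:ℝ) * a + a) = (fun x : ℝ => x + ((n:ℝ)+1) * a) := by
      funext x; ring
    rw [e] at this
    simpa [Nat.cast_succ] using this


lemma int_in_Ioo {x y : ℝ} (h : x + 1 < y) : ∃ k : ℤ, x < k ∧ (k:ℝ) < y := by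
  refine ⟨⌊x⌋ + 1, ?_, ?_⟩
  · push_cast; exact Int.lt_floor_add_one x
  · push_cast
    have := Int.floor_le x
    linarith

/-- Density of `{ nθ + m : n ∈ ℕ, m ∈ ℤ }` for irrational `θ`. -/
lemma dens {θ : ℝ} (hθ : Irrational θ) (u ε : ℝ) (hε : 0 < ε) :
    ∃ (n : ℕ) (m : ℤ), u < n * θ + m ∧ n * θ + m < u + ε := by
  classical
  set ε₁ := min ε 1 with hε₁def
  have hε₁ : 0 < ε₁ := lt_min hε one_pos
  have hε₁le : ε₁ ≤ ε := min_le_left _ _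
  have hε₁1 : ε₁ ≤ 1 := min_le_right _ _
  set S : AddSubgroup ℝ := AddSubgroup.zmultiples (1:ℝ) ⊔ AddSubgroup.zmultiples θ with hS
  have hdense : Dense (S : Set ℝ) := by
    rcases AddSubgroup.dense_or_cyclic S with h | ⟨g, hg⟩
    · exact h
    · exfalso
      have h1 : (1:ℝ) ∈ S := AddSubgroup.mem_sup_left (AddSubgroup.mem_zmultiples 1)
      have hθS : θ ∈ S := AddSubgroup.mem_sup_right (AddSubgroup.mem_zmultiples θ)
      rw [hg, AddSubgroup.mem_closure_singleton] at h1 hθS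
      obtain ⟨n1, hn1⟩ := h1
      obtain ⟨n2, hn2⟩ := hθS
      have hn1' : n1 ≠ 0 := by rintro rfl; simp at hn1
      apply hθ
      refine ⟨(n2 : ℚ) / (n1 : ℚ), ?_⟩
      have hn1R : (n1:ℝ) ≠ 0 := Int.cast_ne_zero.2 hn1'
      have hg1 : g = 1 / (n1:ℝ) := by
        rw [zsmul_eq_mul] at hn1
        field_simp
        linarith [hn1]
      rw [zsmul_eq_mul, hg1] at hn2
      push_cast
      field_simp at hn2 ⊢
      linarith [hn2]
  obtain ⟨x, hxS, hx⟩ : ∃ x ∈ (S : Set ℝ), x ∈ Ioo (0:ℝ) ε₁ := by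
    have := hdense.exists_mem_open isOpen_Ioo (Set.nonempty_Ioo.2 hε₁)
    tauto
  obtain ⟨y, hy, z, hz, hyz⟩ := (AddSubgroup.mem_sup).1 hxS
  obtain ⟨q, rfl⟩ := AddSubgroup.mem_zmultiples_iff.1 hy
  obtain ⟨p, rfl⟩ := AddSubgroup.mem_zmultiples_iff.1 hz
  rw [zsmul_eq_mul, zsmul_eq_mul, mul_one] at hyz
  have hx0 : 0 < x := hx.1
  have hxε : x < ε₁ := hx.2
  have hp0 : p ≠ 0 := by
    rintro rfl
    rw [← hyz] at hx
    simp at hx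
    obtain ⟨h1, h2⟩ := hx
    have hq1 : (1:ℝ) ≤ q := by exact_mod_cast h1
    linarith
  rcases lt_or_gt_of_ne hp0 with hpneg | hppos
  · -- p < 0 : pick k ≤ -2
    set M : ℤ := max 0 ⌈u + 2⌉ with hM
    have hMR : (u + 2) ≤ (M:ℝ) := by
      rw [hM]; push_cast [Int.cast_max]
      exact le_trans (Int.le_ceil _) (by
        simp only [le_max_iff]
        right; rfl)
    set u' := u - (M:ℝ) with hu'
    have hu2 : u' + ε₁ ≤ -1 := by
      have : u' ≤ -2 := by rw [hu']; linarith
      linarith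
    obtain ⟨k, hk1, hk2⟩ : ∃ k : ℤ, u'/x < k ∧ (k:ℝ) < (u' + ε₁)/x := by
      apply int_in_Ioo
      have h2 : (u'+ε₁)/x = u'/x + ε₁/x := add_div _ _ _
      have : 1 < ε₁/x := (one_lt_div hx0).2 hxε
      rw [h2]
      linarith
    have hkx1 : u' < k*x := by
      have := (div_lt_iff₀ hx0).1 hk1
      linarith
    have hkx2 : (k:ℝ)*x < u' + ε₁ := (lt_div_iff₀ hx0).1 hk2
    have hkneg : (k:ℝ) < -1 := by
      have h1 : (u' + ε₁)/x ≤ -1 := by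
        rw [div_le_iff₀ hx0]
        nlinarith
      linarith
    have hkneg' : k < 0 := by
      have : (k:ℝ) < 0 := by linarith
      exact_mod_cast this
    have hkp : 0 < k * p := mul_pos_of_neg_of_neg hkneg' hpneg
    refine ⟨(k*p).toNat, k*q + M, ?_, ?_⟩ <;>
    · have hcast : (((k*p).toNat : ℕ) : ℝ) = (k:ℝ)*(p:ℝ) := by
        have := Int.toNat_of_nonneg hkp.le
        exact_mod_cast congrArg (Int.cast : ℤ → ℝ) this
      rw [hcast]
      push_cast
      nlinarith [hkx1, hkx2, hε₁le, hyz]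
  · -- p > 0 : pick k ≥ 2
    set M : ℤ := max 0 ⌈1 - u⌉ with hM
    have hMR : (1 - u) ≤ (M:ℝ) := by
      rw [hM]; push_cast [Int.cast_max]
      exact le_trans (Int.le_ceil _) (by
        simp only [le_max_iff]
        right; rfl)
    set u' := u + (M:ℝ) with hu'
    have hu1 : 1 ≤ u' := by rw [hu']; linarith
    obtain ⟨k, hk1, hk2⟩ : ∃ k : ℤ, u'/x < k ∧ (k:ℝ) < (u' + ε₁)/x := by
      apply int_in_Ioo
      have h2 : (u'+ε₁)/x = u'/x + ε₁/x := add_div _ _ _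
      have : 1 < ε₁/x := (one_lt_div hx0).2 hxε
      rw [h2]
      linarith
    have hkx1 : u' < k*x := by
      have := (div_lt_iff₀ hx0).1 hk1
      linarith
    have hkx2 : (k:ℝ)*x < u' + ε₁ := (lt_div_iff₀ hx0).1 hk2
    have hkpos' : (1:ℝ) < k := by
      have h1 : 1 ≤ u'/x := by
        rw [le_div_iff₀ hx0]
        nlinarith
      linarith
    have hkpos : 0 < k := by
      have : (0:ℝ) < k := by linarith
      exact_mod_cast this
    have hkp : 0 ≤ k * p := le_of_lt (mul_pos hkpos hppos)
    refine ⟨(k*p).toNat, k*q - M, ?_, ?_⟩ <;>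
    · have hcast : (((k*p).toNat : ℕ) : ℝ) = (k:ℝ)*(p:ℝ) := by
        have := Int.toNat_of_nonneg hkp
        exact_mod_cast congrArg (Int.cast : ℤ → ℝ) this
      rw [hcast]
      push_cast
      nlinarith [hkx1, hkx2, hε₁le, hyz]


/-! ### shapes and moves -/

def Sh (c p₂ d p₁ : ℝ) : Set ℝ := Set.Icc c (c+p₂) ∪ Set.Icc (c+d) (c+d+p₁)

def G2 (a b dl p₂ d p₁ : ℝ) : Prop := ∃ c, GoodW a b dl (Sh c p₂ d p₁)

def G1 (a b dl L : ℝ) : Prop := ∃ c, GoodW a b dl (Set.Icc c (c+L))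

variable {a b dl : ℝ}

lemma Sh_translate (t c p₂ d p₁ : ℝ) :
    (fun x => x + t) '' Sh c p₂ d p₁ = Sh (c+t) p₂ d p₁ := by
  unfold Sh
  rw [Set.image_union, image_add_const_Icc, image_add_const_Icc]
  have e1 : c + p₂ + t = c + t + p₂ := by ring
  have e2 : c + d + t = c + t + d := by ring
  have e3 : c + d + p₁ + t = c + t + d + p₁ := by ring
  rw [e1, e2, e3]

lemma g2_shift (ha : Irrational a) {p₂ d p₁ : ℝ} (h : G2 a b dl p₂ d p₁)
    (lo hi : ℝ) (hlh : lo < hi) :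
    ∃ w, lo < w ∧ w < hi ∧ GoodW a b dl (Sh w p₂ d p₁) := by
  obtain ⟨c, hc⟩ := h
  obtain ⟨n, m, h1, h2⟩ := dens ha (lo - c) (hi - lo) (by linarith)
  refine ⟨c + (n * a + m), by linarith, by linarith, ?_⟩
  have h3 := good_int m (good_rotN n hc)
  rw [Sh_translate, Sh_translate] at h3
  have e : c + n*a + m = c + (n*a + m) := by ring
  rwa [e] at h3

lemma g2_mod {p₂ d p₁ : ℝ} (h : G2 a b dl p₂ d p₁) : G2 a b dl p₂ (d-1) p₁ := by
  obtain ⟨c, hc⟩ := h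
  refine ⟨c, good_sub ?_ hc⟩
  intro x hx
  rcases hx with hx | hx
  · exact ⟨x, Or.inl hx, rfl⟩
  · refine ⟨x - 1, Or.inr ?_, ?_⟩
    · simp only [Set.mem_Icc] at hx ⊢
      exact ⟨by linarith [hx.1], by linarith [hx.2]⟩
    · have h1 : x - 1 + ((1:ℤ):ℝ) = x := by push_cast; ring
      calc ιc (x-1) = ιc (x - 1 + ((1:ℤ):ℝ)) := (ιc_add_int _ 1).symm
        _ = ιc x := by rw [h1]

lemma g2_mod' {p₂ d p₁ : ℝ} (h : G2 a b dl p₂ d p₁) : G2 a b dl p₂ (d+1) p₁ := by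
  obtain ⟨c, hc⟩ := h
  refine ⟨c, good_sub ?_ hc⟩
  intro x hx
  rcases hx with hx | hx
  · exact ⟨x, Or.inl hx, rfl⟩
  · refine ⟨x + 1, Or.inr ?_, ?_⟩
    · simp only [Set.mem_Icc] at hx ⊢
      exact ⟨by linarith [hx.1], by linarith [hx.2]⟩
    · have h1 : x + ((1:ℤ):ℝ) = x + 1 := by push_cast; ring
      calc ιc (x+1) = ιc (x + ((1:ℤ):ℝ)) := by rw [h1]
        _ = ιc x := ιc_add_int _ 1

lemma g2_hull {p₂ d p₁ : ℝ} (h : G2 a b dl p₂ d p₁) :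
    G1 a b dl (max p₂ (d+p₁) - min d 0) := by
  obtain ⟨c, hc⟩ := h
  refine ⟨c + min d 0, good_mono ?_ hc⟩
  intro x hx
  have hb1 : c + min d 0 + (max p₂ (d+p₁) - min d 0) = c + max p₂ (d+p₁) := by ring
  rw [Set.mem_Icc, hb1]
  rcases hx with hx | hx <;> simp only [Set.mem_Icc] at hx
  · exact ⟨le_trans (by linarith [min_le_right d 0]) hx.1,
      le_trans hx.2 (by linarith [le_max_left p₂ (d+p₁)])⟩
  · exact ⟨le_trans (by linarith [min_le_left d 0]) hx.1,
      le_trans hx.2 (by linarith [le_max_right p₂ (d+p₁)])⟩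

lemma g1_mono {L L' : ℝ} (h : G1 a b dl L) (hLL : L ≤ L') : G1 a b dl L' := by
  obtain ⟨c, hc⟩ := h
  exact ⟨c, good_mono (Set.Icc_subset_Icc le_rfl (by linarith)) hc⟩

lemma g1_g2 {L : ℝ} (hL : 0 ≤ L) (h : G1 a b dl L) : G2 a b dl L L 0 := by
  obtain ⟨c, hc⟩ := h
  exact ⟨c, good_mono Set.subset_union_left hc⟩

lemma g2_g1 {L : ℝ} (hL : 0 ≤ L) (h : G2 a b dl L L 0) : G1 a b dl L := by
  obtain ⟨c, hc⟩ := h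
  refine ⟨c, good_mono (Set.union_subset le_rfl ?_) hc⟩
  intro x hx
  simp only [Set.mem_Icc, add_zero] at hx ⊢
  exact ⟨by linarith [hx.1], by linarith [hx.2]⟩

/-! ### positioning moves -/

lemma g1_shift (ha : Irrational a) {L : ℝ} (h : G1 a b dl L) (lo hi : ℝ) (hlh : lo < hi) :
    ∃ w, lo < w ∧ w < hi ∧ GoodW a b dl (Set.Icc w (w+L)) := by
  obtain ⟨c, hc⟩ := h
  obtain ⟨n, m, h1, h2⟩ := dens ha (lo - c) (hi - lo) (by linarith)
  refine ⟨c + (n * a + m), by linarith, by linarith, ?_⟩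
  have h3 := good_int m (good_rotN n hc)
  rw [image_add_const_Icc, image_add_const_Icc] at h3
  have e1 : c + (n:ℝ)*a + (m:ℝ) = c + ((n:ℝ)*a + (m:ℝ)) := by ring
  have e2 : c + L + (n:ℝ)*a + (m:ℝ) = c + ((n:ℝ)*a + (m:ℝ)) + L := by ring
  rwa [e1, e2] at h3

lemma ιc_sub_one (x : ℝ) : ιc (x - 1) = ιc x := by
  have h1 : x - 1 + ((1:ℤ):ℝ) = x := by push_cast; ring
  calc ιc (x-1) = ιc (x - 1 + ((1:ℤ):ℝ)) := (ιc_add_int _ 1).symm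
    _ = ιc x := by rw [h1]

lemma wstep (ha : Irrational a) (hd0 : 0 < dl) (hd1 : dl < 1)
    {p₂ d p₁ : ℝ} (h0 : 0 ≤ p₁) (h0' : 0 ≤ p₂) (h1 : p₁ < dl) (h2 : p₂ < 1 - dl)
    (h3 : p₂ < d) (h4 : d + p₁ < 1) (hg : G2 a b dl p₂ d p₁) :
    G2 a b dl p₂ (d + b - 1) p₁ := by
  obtain ⟨w, hw1, hw2, hw⟩ := g2_shift ha hg (max dl (1-d)) (min (1-p₂) (1+dl-d-p₁))
    (max_lt (lt_min (by linarith) (by linarith)) (lt_min (by linarith) (by linarith)))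
  have hwdl : dl < w := lt_of_le_of_lt (le_max_left _ _) hw1
  have hwd : 1 - d < w := lt_of_le_of_lt (le_max_right _ _) hw1
  have hw3 : w < 1 - p₂ := lt_of_lt_of_le hw2 (min_le_left _ _)
  have hw4 : w < 1 + dl - d - p₁ := lt_of_lt_of_le hw2 (min_le_right _ _)
  have hgood : GoodW a b dl (Set.Icc w (w+p₂) ∪ Set.Icc (w+d-1) (w+d-1+p₁)) := by
    refine good_sub ?_ hw
    intro x hx
    rcases hx with hx | hx
    · exact ⟨x, Or.inl hx, rfl⟩
    · refine ⟨x-1, Or.inr ?_, ιc_sub_one x⟩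
      simp only [Set.mem_Icc] at hx ⊢
      exact ⟨by linarith [hx.1], by linarith [hx.2]⟩
  have hsub : (Set.Icc w (w+p₂) ∪ Set.Icc (w+d-1) (w+d-1+p₁)) ⊆ Set.Ico 0 1 := by
    intro x hx
    rcases hx with hx | hx <;> simp only [Set.mem_Icc] at hx <;>
      exact ⟨by linarith [hx.1], by linarith [hx.2]⟩
  have hstep := good_step hgood hsub
  have e1 : (Set.Icc w (w+p₂) ∪ Set.Icc (w+d-1) (w+d-1+p₁)) ∩ Set.Iic dl
      = Set.Icc (w+d-1) (w+d-1+p₁) := by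
    ext x
    simp only [Set.mem_inter_iff, Set.mem_union, Set.mem_Icc, Set.mem_Iic]
    constructor
    · rintro ⟨hx | hx, hxd⟩
      · exfalso; linarith [hx.1]
      · exact hx
    · intro hx; exact ⟨Or.inr hx, by linarith [hx.2]⟩
  have e2 : (Set.Icc w (w+p₂) ∪ Set.Icc (w+d-1) (w+d-1+p₁)) ∩ Set.Ioi dl
      = Set.Icc w (w+p₂) := by
    ext x
    simp only [Set.mem_inter_iff, Set.mem_union, Set.mem_Icc, Set.mem_Ioi]
    constructor
    · rintro ⟨hx | hx, hxd⟩
      · exact hx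
      · exfalso; linarith [hx.2]
    · intro hx; exact ⟨Or.inl hx, by linarith [hx.1]⟩
  rw [e1, e2, image_add_const_Icc, image_add_const_Icc] at hstep
  refine ⟨w + a, good_mono ?_ hstep⟩
  intro x hx
  rcases hx with hx | hx <;> simp only [Set.mem_Icc] at hx
  · refine Or.inr ?_
    simp only [Set.mem_Icc]
    exact ⟨by linarith [hx.1], by linarith [hx.2]⟩
  · refine Or.inl ?_
    simp only [Set.mem_Icc]
    exact ⟨by linarith [hx.1], by linarith [hx.2]⟩

lemma split_dl (ha : Irrational a) (hd0 : 0 < dl) (hd1 : dl < 1)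
    {L σ₁ σ₂ : ℝ} (hL : 0 < L) (hσ0 : 0 ≤ σ₁) (hσL1 : L - 1 + dl ≤ σ₁)
    (hσ : σ₁ < σ₂) (hσdl : σ₂ ≤ dl) (hσL : σ₂ ≤ L) (hg : G1 a b dl L) :
    ∃ s, σ₁ < s ∧ s < σ₂ ∧ G2 a b dl (L-s) (b-s) s := by
  obtain ⟨t, ht1, ht2, ht⟩ := g1_shift ha hg (dl - σ₂) (dl - σ₁) (by linarith)
  set s := dl - t with hs
  have hs1 : σ₁ < s := by rw [hs]; linarith
  have hs2 : s < σ₂ := by rw [hs]; linarith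
  have ht0 : 0 < t := by linarith
  have htL : t + L < 1 := by linarith
  have htdl : t ≤ dl := by linarith
  have hdtL : dl ≤ t + L := by linarith
  have hsub : Set.Icc t (t+L) ⊆ Set.Ico 0 1 := by
    intro x hx
    simp only [Set.mem_Icc] at hx
    exact ⟨by linarith [hx.1], by linarith [hx.2]⟩
  have hstep := good_step ht hsub
  have e1 : Set.Icc t (t+L) ∩ Set.Iic dl = Set.Icc t dl := by
    ext x
    simp only [Set.mem_inter_iff, Set.mem_Icc, Set.mem_Iic]
    constructor
    · rintro ⟨hx, hxd⟩; exact ⟨hx.1, hxd⟩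
    · intro hx; exact ⟨⟨hx.1, by linarith [hx.2]⟩, hx.2⟩
  have e2 : Set.Icc t (t+L) ∩ Set.Ioi dl = Set.Ioc dl (t+L) := by
    ext x
    simp only [Set.mem_inter_iff, Set.mem_Icc, Set.mem_Ioi, Set.mem_Ioc]
    constructor
    · rintro ⟨hx, hxd⟩; exact ⟨hxd, hx.2⟩
    · intro hx; exact ⟨⟨by linarith [hx.1], hx.2⟩, hx.1⟩
  rw [e1, e2, image_add_const_Icc, image_add_const_Ioc] at hstep
  refine ⟨s, hs1, hs2, dl + a, good_mono ?_ hstep⟩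
  intro x hx
  rcases hx with hx | hx
  · simp only [Set.mem_Icc] at hx
    refine Or.inr ?_
    simp only [Set.mem_Icc]
    constructor
    · rw [hs]; linarith [hx.1]
    · rw [hs]; linarith [hx.2]
  · simp only [Set.mem_Ioc] at hx
    refine Or.inl ?_
    simp only [Set.mem_Icc]
    constructor
    · linarith [hx.1]
    · rw [hs]; linarith [hx.2]

lemma split_0 (ha : Irrational a) (hd0 : 0 < dl) (hd1 : dl < 1)
    {L σ₁ σ₂ : ℝ} (hL : 0 < L) (hσ0 : 0 < σ₁)
    (hσ : σ₁ < σ₂) (hσdl : σ₂ ≤ dl) (hσL : σ₂ ≤ L) (hL1 : L ≤ 1 - dl) (hg : G1 a b dl L) :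
    ∃ p₁, σ₁ < p₁ ∧ p₁ < σ₂ ∧ G2 a b dl (L-p₁) ((L-p₁)+b) p₁ := by
  obtain ⟨t, ht1, ht2, ht⟩ := g1_shift ha hg (1 - L + σ₁) (1 - L + σ₂) (by linarith)
  set p₁ := t + L - 1 with hp
  have hp1 : σ₁ < p₁ := by rw [hp]; linarith
  have hp2 : p₁ < σ₂ := by rw [hp]; linarith
  have htdl : dl < t := by linarith
  have ht1' : t < 1 := by linarith
  have hgood : GoodW a b dl (Set.Icc 0 p₁ ∪ Set.Ico t 1) := by
    refine good_sub ?_ ht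
    intro x hx
    simp only [Set.mem_Icc] at hx
    by_cases hx1 : x < 1
    · exact ⟨x, Or.inr ⟨hx.1, hx1⟩, rfl⟩
    · refine ⟨x-1, Or.inl ?_, ιc_sub_one x⟩
      simp only [Set.mem_Icc]
      constructor
      · linarith [hx.1]
      · rw [hp]; linarith [hx.2]
  have hsub : (Set.Icc 0 p₁ ∪ Set.Ico t 1) ⊆ Set.Ico 0 1 := by
    intro x hx
    rcases hx with hx | hx
    · simp only [Set.mem_Icc] at hx
      exact ⟨hx.1, by linarith [hx.2]⟩
    · exact ⟨by linarith [hx.1], hx.2⟩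
  have hstep := good_step hgood hsub
  have e1 : (Set.Icc 0 p₁ ∪ Set.Ico t 1) ∩ Set.Iic dl = Set.Icc 0 p₁ := by
    ext x
    simp only [Set.mem_inter_iff, Set.mem_union, Set.mem_Icc, Set.mem_Ico, Set.mem_Iic]
    constructor
    · rintro ⟨hx | hx, hxd⟩
      · exact hx
      · exfalso; linarith [hx.1]
    · intro hx; exact ⟨Or.inl hx, by linarith [hx.2]⟩
  have e2 : (Set.Icc 0 p₁ ∪ Set.Ico t 1) ∩ Set.Ioi dl = Set.Ico t 1 := by
    ext x
    simp only [Set.mem_inter_iff, Set.mem_union, Set.mem_Icc, Set.mem_Ico, Set.mem_Ioi]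
    constructor
    · rintro ⟨hx | hx, hxd⟩
      · exfalso; linarith [hx.2]
      · exact hx
    · intro hx; exact ⟨Or.inr hx, by linarith [hx.1]⟩
  rw [e1, e2, image_add_const_Icc, image_add_const_Ico] at hstep
  have hraw : G2 a b dl (L-p₁) (b-t) p₁ := by
    refine ⟨t + a, good_mono ?_ hstep⟩
    intro x hx
    rcases hx with hx | hx
    · simp only [Set.mem_Icc] at hx
      refine Or.inr ?_
      simp only [Set.mem_Icc]
      constructor
      · linarith [hx.1]
      · linarith [hx.2]
    · simp only [Set.mem_Ico] at hx
      refine Or.inl ?_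
      simp only [Set.mem_Icc]
      constructor
      · linarith [hx.1]
      · rw [hp]; linarith [hx.2]
  have h2 := g2_mod' hraw
  have e : b - t + 1 = (L - p₁) + b := by rw [hp]; ring
  rw [e] at h2
  exact ⟨p₁, hp1, hp2, h2⟩

/-! ### the orbit sequence -/

noncomputable def vv (b : ℝ) (k : ℕ) : ℝ := Int.fract (((k:ℝ)+1) * b)

lemma irr_nat_mul {θ : ℝ} (hθ : Irrational θ) (n : ℕ) (hn : n ≠ 0) (m : ℤ) :
    (n:ℝ) * θ ≠ m := by
  intro h
  have hn' : ((n:ℝ)) ≠ 0 := Nat.cast_ne_zero.2 hn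
  apply hθ
  refine ⟨(m : ℚ) / (n : ℚ), ?_⟩
  have hθval : θ = (m:ℝ) / (n:ℝ) := by field_simp; linarith [h]
  rw [hθval]
  push_cast
  ring

lemma vv0 {b : ℝ} (hb0 : 0 ≤ b) (hb1 : b < 1) : vv b 0 = b := by
  unfold vv
  rw [show (((0:ℕ):ℝ)+1) * b = b by norm_num]
  exact Int.fract_eq_self.2 ⟨hb0, hb1⟩

lemma vpos {b : ℝ} (hb : Irrational b) (k : ℕ) : 0 < vv b k := by
  rcases lt_or_eq_of_le (Int.fract_nonneg (((k:ℝ)+1) * b)) with h | h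
  · exact h
  · exfalso
    have h2 : ((k:ℝ)+1) * b = (⌊((k:ℝ)+1) * b⌋ : ℤ) := by
      have h3 : Int.fract (((k:ℝ)+1) * b) = 0 := h.symm
      rw [Int.fract] at h3
      linarith [h3]
    have h4 : (((k+1:ℕ)):ℝ) * b = ((⌊((k:ℝ)+1) * b⌋ : ℤ):ℝ) := by push_cast; push_cast at h2; linarith
    exact irr_nat_mul hb (k+1) (by omega) _ h4

lemma vlt1 (b : ℝ) (k : ℕ) : vv b k < 1 := Int.fract_lt_one _

lemma vstep {b : ℝ} (hb0 : 0 ≤ b) (hb1 : b < 1) (k : ℕ) :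
    vv b (k+1) = vv b k + b ∨ vv b (k+1) = vv b k + b - 1 := by
  have hx : (((k:ℝ)+1)+1) * b = (((k:ℝ)+1) * b) + b := by ring
  have h1 : vv b (k+1) = Int.fract (vv b k + b) := by
    unfold vv
    push_cast
    rw [hx]
    have h2 : ((k:ℝ)+1)*b + b = (Int.fract (((k:ℝ)+1)*b) + b) + (⌊((k:ℝ)+1)*b⌋ : ℤ) := by
      rw [Int.fract]
      ring
    rw [h2, Int.fract_add_intCast]
  rcases lt_or_ge (vv b k + b) 1 with hc | hc
  · left
    rw [h1]
    exact Int.fract_eq_self.2 ⟨by have := Int.fract_nonneg (((k:ℝ)+1) * b); unfold vv; positivity, hc⟩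
  · right
    rw [h1]
    have h3 : Int.fract (vv b k + b) = Int.fract (vv b k + b - 1) := by
      have := Int.fract_sub_intCast (vv b k + b) 1
      simpa using this.symm
    rw [h3]
    refine Int.fract_eq_self.2 ⟨by linarith, ?_⟩
    have := vlt1 b k
    linarith

lemma nosum {b : ℝ} (hb : Irrational b) (j k : ℕ) : vv b j + vv b k ≠ 1 := by
  intro h
  unfold vv at h
  rw [Int.fract, Int.fract] at h
  have h3 : ((j+k+2 : ℕ):ℝ) * b
      = ((1 + ⌊((j:ℝ)+1)*b⌋ + ⌊((k:ℝ)+1)*b⌋ : ℤ):ℝ) := by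
    push_cast
    push_cast at h
    linarith [h]
  exact irr_nat_mul hb (j+k+2) (by omega) _ h3

/-! ### walks -/

lemma walk0 (ha : Irrational a) (hb : Irrational b) (hb0 : 0 < b) (hblt : b < 1)
    (hd0 : 0 < dl) (hd1 : dl < 1)
    {L p₁ : ℝ} (hp0 : 0 < p₁) (hpd : p₁ < dl) (hpL : p₁ < L) (hLd : L ≤ 1 - dl)
    (K : ℕ) (hpri : ∀ k, k < K → vv b k < 1 - L)
    (hg : G2 a b dl (L-p₁) ((L-p₁)+b) p₁) : G2 a b dl (L-p₁) ((L-p₁) + vv b K) p₁ := by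
  induction K with
  | zero => rwa [vv0 hb0.le hblt]
  | succ K ih =>
    have hK := ih (fun k hk => hpri k (by omega))
    have h' := wstep ha hd0 hd1 hp0.le (by linarith) hpd (by linarith)
      (by linarith [vpos hb K]) (by have := hpri K (by omega); linarith) hK
    rcases vstep hb0.le hblt K with he | he
    · have h2 := g2_mod' h'
      have e : (L-p₁) + vv b K + b - 1 + 1 = (L-p₁) + vv b (K+1) := by rw [he]; ring
      rwa [e] at h2
    · have e : (L-p₁) + vv b K + b - 1 = (L-p₁) + vv b (K+1) := by rw [he]; ring
      rwa [e] at h'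

lemma walkd (ha : Irrational a) (hb : Irrational b) (hb0 : 0 < b) (hblt : b < 1)
    (hd0 : 0 < dl) (hd1 : dl < 1)
    {L s : ℝ} (hs0 : 0 < s) (hsd : s < dl) (hsL : s < L) (hLd : L ≤ 1 - dl)
    (K : ℕ) (hpri : ∀ k, k < K → L < vv b k)
    (hg : G2 a b dl (L-s) (b-s) s) : G2 a b dl (L-s) (vv b K - s) s := by
  induction K with
  | zero =>
    have e : b - s = vv b 0 - s := by rw [vv0 hb0.le hblt]
    rwa [e] at hg
  | succ K ih =>
    have hK := ih (fun k hk => hpri k (by omega))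
    have h' := wstep ha hd0 hd1 hs0.le (by linarith) hsd (by linarith)
      (by have := hpri K (by omega); linarith)
      (by have := vlt1 b K; linarith) hK
    rcases vstep hb0.le hblt K with he | he
    · have h2 := g2_mod' h'
      have e : vv b K - s + b - 1 + 1 = vv b (K+1) - s := by rw [he]; ring
      rwa [e] at h2
    · have e : vv b K - s + b - 1 = vv b (K+1) - s := by rw [he]; ring
      rwa [e] at h'

/-! ### rounds -/

lemma round0_once (ha : Irrational a) (hb : Irrational b) (hb0 : 0 < b)
    (hbd : b < dl) (hbd1 : b < 1 - dl) (hd0 : 0 < dl) (hd1 : dl < 1)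
    {L : ℝ} (hL0 : 0 < L) (hLb : L ≤ b) (K : ℕ)
    (hpri : ∀ k, k < K → vv b k < 1 - L) (hKc : 1 - L ≤ vv b K)
    (hg : G1 a b dl L) :
    G1 a b dl (max (1 - vv b K) (L - (1 - vv b K)/2)) := by
  have hblt : b < 1 := by linarith
  set y := 1 - vv b K with hy
  have hy0 : 0 < y := by have := vlt1 b K; rw [hy]; linarith
  have hyL : y ≤ L := by rw [hy]; linarith
  obtain ⟨p₁, hp1, hp2, hgs⟩ := split_0 (a := a) (b := b) (σ₁ := y/2) (σ₂ := min y L)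
    ha hd0 hd1 hL0 (by linarith) (lt_min (by linarith) (by linarith))
    (le_trans (min_le_right _ _) (by linarith)) (min_le_right _ _)
    (by linarith) hg
  have hp1y : p₁ < y := lt_of_lt_of_le hp2 (min_le_left _ _)
  have hp1L : p₁ < L := lt_of_lt_of_le hp2 (min_le_right _ _)
  have hwalk := walk0 ha hb hb0 hblt hd0 hd1 (by linarith : 0 < p₁)
    (by linarith : p₁ < dl) hp1L (by linarith) K hpri hgs
  have h2 := g2_mod hwalk
  have e : (L-p₁) + vv b K - 1 = (L-p₁) - y := by rw [hy]; ring
  rw [e] at h2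
  have hhull := g2_hull h2
  have hmax : max (L-p₁) ((L-p₁) - y + p₁) = L - p₁ := max_eq_left (by linarith)
  rw [hmax] at hhull
  rcases le_or_gt 0 ((L-p₁) - y) with hc | hc
  · have hmin : min ((L-p₁)-y) 0 = 0 := min_eq_right hc
    rw [hmin, sub_zero] at hhull
    exact g1_mono hhull (le_trans (by linarith) (le_max_right _ _))
  · have hmin : min ((L-p₁)-y) 0 = (L-p₁)-y := min_eq_left hc.le
    rw [hmin] at hhull
    have e2 : L - p₁ - (L - p₁ - y) = y := by ring
    rw [e2] at hhull
    exact g1_mono hhull (le_max_left _ _)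

lemma roundd_once (ha : Irrational a) (hb : Irrational b) (hb0 : 0 < b)
    (hbd : b < dl) (hbd1 : b < 1 - dl) (hd0 : 0 < dl) (hd1 : dl < 1)
    {L : ℝ} (hL0 : 0 < L) (hLb : L ≤ b) (K : ℕ)
    (hpri : ∀ k, k < K → L < vv b k) (hKc : vv b K ≤ L)
    (hg : G1 a b dl L) :
    G1 a b dl (max (vv b K) (L - vv b K/2)) := by
  have hblt : b < 1 := by linarith
  set y := vv b K with hy
  have hy0 : 0 < y := vpos hb K
  have hyL : y ≤ L := hKc
  obtain ⟨s, hs1, hs2, hgs⟩ := split_dl (a := a) (b := b) (σ₁ := y/2) (σ₂ := min y L)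
    ha hd0 hd1 hL0 (by linarith) (by linarith)
    (lt_min (by linarith) (by linarith))
    (le_trans (min_le_right _ _) (by linarith)) (min_le_right _ _) hg
  have hsy : s < y := lt_of_lt_of_le hs2 (min_le_left _ _)
  have hsL : s < L := lt_of_lt_of_le hs2 (min_le_right _ _)
  have hwalk := walkd ha hb hb0 hblt hd0 hd1 (by linarith : 0 < s)
    (by linarith : s < dl) hsL (by linarith) K hpri hgs
  have hhull := g2_hull hwalk
  have e : y - s + s = y := by ring
  rw [e] at hhull
  have hmin : min (y - s) 0 = 0 := min_eq_right (by linarith)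
  rw [hmin, sub_zero] at hhull
  refine g1_mono hhull (max_le ?_ ?_)
  · exact le_trans (by linarith) (le_max_right _ _)
  · exact le_max_left _ _

lemma round0_iter (ha : Irrational a) (hb : Irrational b) (hb0 : 0 < b)
    (hbd : b < dl) (hbd1 : b < 1 - dl) (hd0 : 0 < dl) (hd1 : dl < 1)
    (K : ℕ) {y : ℝ} (hyv : y = 1 - vv b K) :
    ∀ n : ℕ, ∀ L : ℝ, 0 < L → L ≤ b → (∀ k, k < K → vv b k < 1 - L) → y ≤ L →
      G1 a b dl L → L ≤ y + n * (y/2) → G1 a b dl y := by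
  intro n
  induction n with
  | zero =>
    intro L hL0 hLb hpri hyL hg hbound
    simp only [Nat.cast_zero, zero_mul, add_zero] at hbound
    exact g1_mono hg hbound
  | succ n ih =>
    intro L hL0 hLb hpri hyL hg hbound
    by_cases hc : L ≤ y
    · exact g1_mono hg hc
    · have hcontact : 1 - L ≤ vv b K := by rw [hyv] at hyL; linarith
      have hro := round0_once ha hb hb0 hbd hbd1 hd0 hd1 hL0 hLb K hpri hcontact hg
      rw [← hyv] at hro
      rcases le_or_gt (L - y/2) y with h2 | h2
      · rwa [max_eq_left h2] at hro
      · rw [max_eq_right h2.le] at hro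
        have hy0 : 0 < y := by rw [hyv]; have := vlt1 b K; linarith
        refine ih (L - y/2) (by linarith) (by linarith)
          (fun k hk => by have := hpri k hk; linarith) (by linarith) hro ?_
        push_cast at hbound ⊢
        linarith

lemma roundd_iter (ha : Irrational a) (hb : Irrational b) (hb0 : 0 < b)
    (hbd : b < dl) (hbd1 : b < 1 - dl) (hd0 : 0 < dl) (hd1 : dl < 1)
    (K : ℕ) {y : ℝ} (hyv : y = vv b K) :
    ∀ n : ℕ, ∀ L : ℝ, 0 < L → L ≤ b → (∀ k, k < K → L < vv b k) → y ≤ L →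
      G1 a b dl L → L ≤ y + n * (y/2) → G1 a b dl y := by
  intro n
  induction n with
  | zero =>
    intro L hL0 hLb hpri hyL hg hbound
    simp only [Nat.cast_zero, zero_mul, add_zero] at hbound
    exact g1_mono hg hbound
  | succ n ih =>
    intro L hL0 hLb hpri hyL hg hbound
    by_cases hc : L ≤ y
    · exact g1_mono hg hc
    · have hcontact : vv b K ≤ L := by rw [hyv] at hyL; linarith
      have hro := roundd_once ha hb hb0 hbd hbd1 hd0 hd1 hL0 hLb K hpri hcontact hg
      rw [← hyv] at hro
      rcases le_or_gt (L - y/2) y with h2 | h2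
      · rwa [max_eq_left h2] at hro
      · rw [max_eq_right h2.le] at hro
        have hy0 : 0 < y := by rw [hyv]; exact vpos hb K
        refine ih (L - y/2) (by linarith) (by linarith)
          (fun k hk => by have := hpri k hk; linarith) (by linarith) hro ?_
        push_cast at hbound ⊢
        linarith

lemma exists_fuel {y L : ℝ} (hy0 : 0 < y) : ∃ n : ℕ, L ≤ y + n * (y/2) := by
  refine ⟨⌈(L-y)/(y/2)⌉₊, ?_⟩
  have h1 : (L-y)/(y/2) ≤ (⌈(L-y)/(y/2)⌉₊ : ℝ) := Nat.le_ceil _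
  have h2 : L - y ≤ (⌈(L-y)/(y/2)⌉₊ : ℝ) * (y/2) := by
    rw [div_le_iff₀ (by linarith : (0:ℝ) < y/2)] at h1
    linarith
  linarith

lemma round0_to_y (ha : Irrational a) (hb : Irrational b) (hb0 : 0 < b)
    (hbd : b < dl) (hbd1 : b < 1 - dl) (hd0 : 0 < dl) (hd1 : dl < 1)
    {L : ℝ} (hL0 : 0 < L) (hLb : L ≤ b) (K : ℕ)
    (hpri : ∀ k, k < K → vv b k < 1 - L) (hKc : 1 - L ≤ vv b K)
    (hg : G1 a b dl L) : G1 a b dl (1 - vv b K) := by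
  have hy0 : 0 < 1 - vv b K := by have := vlt1 b K; linarith
  obtain ⟨n, hn⟩ := exists_fuel (L := L) hy0
  exact round0_iter ha hb hb0 hbd hbd1 hd0 hd1 K rfl n L hL0 hLb hpri
    (by linarith) hg hn

lemma roundd_to_y (ha : Irrational a) (hb : Irrational b) (hb0 : 0 < b)
    (hbd : b < dl) (hbd1 : b < 1 - dl) (hd0 : 0 < dl) (hd1 : dl < 1)
    {L : ℝ} (hL0 : 0 < L) (hLb : L ≤ b) (K : ℕ)
    (hpri : ∀ k, k < K → L < vv b k) (hKc : vv b K ≤ L)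
    (hg : G1 a b dl L) : G1 a b dl (vv b K) := by
  have hy0 : 0 < vv b K := vpos hb K
  obtain ⟨n, hn⟩ := exists_fuel (L := L) hy0
  exact roundd_iter ha hb hb0 hbd hbd1 hd0 hd1 K rfl n L hL0 hLb hpri hKc hg hn

/-! ### contact indices -/

lemma exists_contactd (hb : Irrational b) {L : ℝ} (hL0 : 0 < L) (hL1 : L < 1) :
    ∃ k : ℕ, vv b k ≤ L := by
  obtain ⟨n, m, h1, h2⟩ := dens hb (-b) L hL0
  refine ⟨n, ?_⟩
  have hval : vv b n = (n:ℝ)*b + b + m := by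
    unfold vv
    have e : ((n:ℝ)+1)*b = ((n:ℝ)*b + b + m) + ((-m:ℤ):ℝ) := by push_cast; ring
    rw [e, Int.fract_add_intCast]
    exact Int.fract_eq_self.2 ⟨by linarith, by linarith⟩
  rw [hval]; linarith

lemma exists_contact0 (hb : Irrational b) {L : ℝ} (hL0 : 0 < L) (hL1 : L < 1) :
    ∃ k : ℕ, 1 - L ≤ vv b k := by
  obtain ⟨n, m, h1, h2⟩ := dens hb (1 - L - b) L hL0
  refine ⟨n, ?_⟩
  have hval : vv b n = (n:ℝ)*b + b + m := by
    unfold vv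
    have e : ((n:ℝ)+1)*b = ((n:ℝ)*b + b + m) + ((-m:ℤ):ℝ) := by push_cast; ring
    rw [e, Int.fract_add_intCast]
    exact Int.fract_eq_self.2 ⟨by linarith, by linarith⟩
  rw [hval]; linarith

/-! ### the main loop -/

lemma loop (ha : Irrational a) (hb : Irrational b) (hb0 : 0 < b)
    (hbd : b < dl) (hbd1 : b < 1 - dl) (hd0 : 0 < dl) (hd1 : dl < 1)
    (ε : ℝ) (hε : 0 < ε) (nst : ℕ) (hst : vv b nst ≤ ε) :
    ∀ M : ℕ, ∀ L : ℝ, 0 < L → L < b →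
      (∀ j : ℕ, vv b j ≤ L → nst ≤ j + M) → G1 a b dl L →
      ∃ L', 0 < L' ∧ L' ≤ ε ∧ G1 a b dl L' := by
  classical
  have hblt : b < 1 := by linarith
  intro M
  induction M with
  | zero =>
    intro L hL0 hLb hM hg
    by_cases hLε : L ≤ ε
    · exact ⟨L, hL0, hLε, hg⟩
    · push_neg at hLε
      have hex : ∃ k : ℕ, vv b k ≤ L := exists_contactd hb hL0 (by linarith)
      set K := Nat.find hex with hK
      have hKle : vv b K ≤ L := Nat.find_spec hex
      have hKpri : ∀ k, k < K → L < vv b k := by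
        intro k hk
        have := Nat.find_min hex hk
        push_neg at this
        exact this
      have hKnst : K ≤ nst := Nat.find_le (le_trans hst hLε.le)
      have hKeq : K = nst := le_antisymm hKnst (by simpa using hM K hKle)
      rcases lt_or_eq_of_le hKle with hlt | heq
      · have h1 := roundd_to_y ha hb hb0 hbd hbd1 hd0 hd1 hL0 hLb.le K hKpri hKle hg
        exact ⟨vv b K, vpos hb K, by rw [hKeq]; exact hst, h1⟩
      · exfalso
        rw [hKeq] at heq
        linarith [hst, heq]
  | succ M ih =>
    intro L hL0 hLb hM hg
    by_cases hLε : L ≤ ε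
    · exact ⟨L, hL0, hLε, hg⟩
    · push_neg at hLε
      have hex : ∃ k : ℕ, vv b k ≤ L := exists_contactd hb hL0 (by linarith)
      set K := Nat.find hex with hK
      have hKle : vv b K ≤ L := Nat.find_spec hex
      have hKpri : ∀ k, k < K → L < vv b k := by
        intro k hk
        have := Nat.find_min hex hk
        push_neg at this
        exact this
      rcases lt_or_eq_of_le hKle with hlt | heq
      · -- dl-round strict
        have h1 := roundd_to_y ha hb hb0 hbd hbd1 hd0 hd1 hL0 hLb.le K hKpri hKle hg
        set L1 := vv b K with hL1
        have hL1pos : 0 < L1 := vpos hb K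
        by_cases hL1ε : L1 ≤ ε
        · exact ⟨L1, hL1pos, hL1ε, h1⟩
        · push_neg at hL1ε
          have hex0 : ∃ k : ℕ, 1 - L1 ≤ vv b k :=
            exists_contact0 hb hL1pos (vlt1 b K)
          set K0 := Nat.find hex0 with hK0
          have hK0c : 1 - L1 ≤ vv b K0 := Nat.find_spec hex0
          have hK0pri : ∀ k, k < K0 → vv b k < 1 - L1 := by
            intro k hk
            have := Nat.find_min hex0 hk
            push_neg at this
            exact this
          have hstrict : 1 - L1 < vv b K0 := by
            rcases lt_or_eq_of_le hK0c with h | h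
            · exact h
            · exfalso
              exact nosum hb K0 K (by rw [← h, hL1]; ring)
          have h2 := round0_to_y ha hb hb0 hbd hbd1 hd0 hd1 hL1pos
            (by linarith : L1 ≤ b) K0 hK0pri hK0c h1
          set L2 := 1 - vv b K0 with hL2
          have hL2pos : 0 < L2 := by have := vlt1 b K0; rw [hL2]; linarith
          have hL2lt : L2 < L1 := by rw [hL2]; linarith
          refine ih L2 hL2pos (by linarith) ?_ h2
          intro j hj
          have hjK : K + 1 ≤ j := by
            by_contra hcon
            push_neg at hcon
            have hjle : j ≤ K := by omega
            rcases lt_or_eq_of_le hjle with hlt2 | heq2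
            · have := hKpri j hlt2; linarith
            · rw [heq2] at hj
              have : L1 ≤ L2 := by rw [hL1]; exact hj
              linarith
          have := hM K hKle
          omega
      · -- stuck dl-round: 0-round at L
        have hex0 : ∃ k : ℕ, 1 - L ≤ vv b k :=
          exists_contact0 hb hL0 (by linarith)
        set K0 := Nat.find hex0 with hK0
        have hK0c : 1 - L ≤ vv b K0 := Nat.find_spec hex0
        have hK0pri : ∀ k, k < K0 → vv b k < 1 - L := by
          intro k hk
          have := Nat.find_min hex0 hk
          push_neg at this
          exact this
        have hstrict : 1 - L < vv b K0 := by
          rcases lt_or_eq_of_le hK0c with h | h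
          · exact h
          · exfalso
            exact nosum hb K0 K (by rw [← h, ← heq]; ring)
        have h2 := round0_to_y ha hb hb0 hbd hbd1 hd0 hd1 hL0 hLb.le K0 hK0pri hK0c hg
        set L2 := 1 - vv b K0 with hL2
        have hL2pos : 0 < L2 := by have := vlt1 b K0; rw [hL2]; linarith
        have hL2lt : L2 < L := by rw [hL2]; linarith
        by_cases hL2ε : L2 ≤ ε
        · exact ⟨L2, hL2pos, hL2ε, h2⟩
        · push_neg at hL2ε
          refine ih L2 hL2pos (by linarith) ?_ h2
          intro j hj
          have hjK : K + 1 ≤ j := by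
            by_contra hcon
            push_neg at hcon
            have hjle : j ≤ K := by omega
            rcases lt_or_eq_of_le hjle with hlt2 | heq2
            · have := hKpri j hlt2; linarith
            · rw [heq2] at hj
              rw [heq] at hj
              linarith
          have := hM K hKle
          omega

/-! ### initial shrink -/

lemma m1 (hb0 : 0 < b) (hbd : b < dl) (hbd1 : b < 1 - dl) (hd0 : 0 < dl) (hd1 : dl < 1) :
    G1 a b dl (1 - b) := by
  have h := good_step (a := a) (b := b) (dl := dl) good_nil (le_refl _)
  have e1 : Set.Ico (0:ℝ) 1 ∩ Set.Iic dl = Set.Icc 0 dl := by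
    ext x
    simp only [Set.mem_inter_iff, Set.mem_Ico, Set.mem_Iic, Set.mem_Icc]
    constructor
    · rintro ⟨hx, hxd⟩; exact ⟨hx.1, hxd⟩
    · intro hx; exact ⟨⟨hx.1, by linarith [hx.2]⟩, hx.2⟩
  have e2 : Set.Ico (0:ℝ) 1 ∩ Set.Ioi dl = Set.Ioo dl 1 := by
    ext x
    simp only [Set.mem_inter_iff, Set.mem_Ico, Set.mem_Ioi, Set.mem_Ioo]
    constructor
    · rintro ⟨hx, hxd⟩; exact ⟨hxd, hx.2⟩
    · intro hx; exact ⟨⟨by linarith [hx.1], hx.2⟩, hx.1⟩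
  rw [e1, e2, image_add_const_Icc, image_add_const_Ioo] at h
  refine ⟨a+b, good_mono ?_ h⟩
  intro x hx
  rcases hx with hx | hx <;> simp only [Set.mem_Icc, Set.mem_Ioo] at hx ⊢
  · exact ⟨by linarith [hx.1], by linarith [hx.2]⟩
  · exact ⟨by linarith [hx.1], by linarith [hx.2]⟩

lemma phase1 (ha : Irrational a) (hb0 : 0 < b)
    (hbd : b < dl) (hbd1 : b < 1 - dl) (hd0 : 0 < dl) (hd1 : dl < 1) :
    ∀ n : ℕ, ∀ L : ℝ, L < 1 → L ≤ b + n * (b/2) → G1 a b dl L → G1 a b dl b := by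
  intro n
  induction n with
  | zero =>
    intro L h1 h2 hg
    simp only [Nat.cast_zero, zero_mul, add_zero] at h2
    exact g1_mono hg h2
  | succ n ih =>
    intro L h1 h2 hg
    by_cases hc : L ≤ b
    · exact g1_mono hg hc
    · push_neg at hc
      by_cases hc2 : L < 2*b
      · obtain ⟨s, hs1, hs2, hgs⟩ := split_dl (a := a) (b := b)
          (σ₁ := max (L-b) (L-1+dl)) (σ₂ := min b (min dl L)) ha hd0 hd1
          (by linarith) (le_trans (by linarith) (le_max_left _ _)) (le_max_right _ _)
          (max_lt (lt_min (by linarith) (lt_min (by linarith) (by linarith)))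
            (lt_min (by linarith) (lt_min (by linarith) (by linarith))))
          (le_trans (min_le_right _ _) (min_le_left _ _))
          (le_trans (min_le_right _ _) (min_le_right _ _)) hg
        have hsb : s < b := lt_of_lt_of_le hs2 (min_le_left _ _)
        have hsLb : L - b < s := lt_of_le_of_lt (le_max_left _ _) hs1
        have hhull := g2_hull hgs
        have e1 : b - s + s = b := by ring
        rw [e1] at hhull
        have e2 : max (L-s) b = b := max_eq_right (by linarith)
        have e3 : min (b-s) 0 = 0 := min_eq_right (by linarith)
        rwa [e2, e3, sub_zero] at hhull
      · push_neg at hc2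
        set τ := min (b/2) ((1-L)/2) with hτ
        have hτ0 : 0 < τ := lt_min (by linarith) (by linarith)
        have hτb : τ ≤ b/2 := min_le_left _ _
        have hτL : τ ≤ (1-L)/2 := min_le_right _ _
        set L' := L + τ with hL'
        have hL'1 : L' < 1 := by rw [hL']; linarith
        have h2b : 2*b < L' := by rw [hL']; linarith
        have hg' : G1 a b dl L' := g1_mono hg (by rw [hL']; linarith)
        obtain ⟨s, hs1, hs2, hgs⟩ := split_dl (a := a) (b := b)
          (σ₁ := max b (L'-1+dl)) (σ₂ := min (L'-b) dl) ha hd0 hd1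
          (by linarith) (le_trans hb0.le (le_max_left _ _)) (le_max_right _ _)
          (max_lt (lt_min (by linarith) (by linarith))
            (lt_min (by linarith) (by linarith)))
          (min_le_right _ _)
          (le_trans (min_le_left _ _) (by linarith)) hg'
        have hsb : b < s := lt_of_le_of_lt (le_max_left _ _) hs1
        have hsL'b : s < L' - b := lt_of_lt_of_le hs2 (min_le_left _ _)
        have hhull := g2_hull hgs
        have e1 : b - s + s = b := by ring
        rw [e1] at hhull
        have e2 : max (L'-s) b = L'-s := max_eq_left (by linarith)
        have e3 : min (b-s) 0 = b-s := min_eq_left (by linarith)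
        rw [e2, e3] at hhull
        have e4 : L' - s - (b - s) = L' - b := by ring
        rw [e4] at hhull
        refine ih (L'-b) (by linarith) ?_ hhull
        push_cast at h2 ⊢
        rw [hL']
        linarith

/-! ### descent -/

lemma descent (ha : Irrational a) (hb : Irrational b) (hb0 : 0 < b)
    (hbd : b < dl) (hbd1 : b < 1 - dl) (hd0 : 0 < dl) (hd1 : dl < 1)
    (ε : ℝ) (hε : 0 < ε) :
    ∃ L c, 0 < L ∧ L ≤ ε ∧ GoodW a b dl (Set.Icc c (c+L)) := by
  classical
  have hblt : b < 1 := by linarith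
  have h1 : G1 a b dl (1-b) := m1 hb0 hbd hbd1 hd0 hd1
  obtain ⟨n, hn⟩ := exists_fuel (y := b) (L := 1-b) hb0
  have h2 : G1 a b dl b := phase1 ha hb0 hbd hbd1 hd0 hd1 n (1-b) (by linarith) hn h1
  -- entry 0-round at L = b
  have hex0 : ∃ k : ℕ, 1 - b ≤ vv b k := exists_contact0 hb hb0 hblt
  set K0 := Nat.find hex0 with hK0
  have hK0c : 1 - b ≤ vv b K0 := Nat.find_spec hex0
  have hK0pri : ∀ k, k < K0 → vv b k < 1 - b := by
    intro k hk
    have := Nat.find_min hex0 hk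
    push_neg at this
    exact this
  have hstrict : 1 - b < vv b K0 := by
    rcases lt_or_eq_of_le hK0c with h | h
    · exact h
    · exfalso
      exact nosum hb K0 0 (by rw [← h, vv0 hb0.le hblt]; ring)
  have h3 := round0_to_y ha hb hb0 hbd hbd1 hd0 hd1 hb0 le_rfl K0 hK0pri hK0c h2
  set y1 := 1 - vv b K0 with hy1
  have hy1pos : 0 < y1 := by have := vlt1 b K0; rw [hy1]; linarith
  have hy1b : y1 < b := by rw [hy1]; linarith
  -- star index
  obtain ⟨nst, hnst⟩ : ∃ k : ℕ, vv b k ≤ min ε b :=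
    exists_contactd hb (lt_min hε hb0) (lt_of_le_of_lt (min_le_right _ _) hblt)
  have hnstε : vv b nst ≤ ε := le_trans hnst (min_le_left _ _)
  obtain ⟨L', hL'0, hL'ε, hL'⟩ := loop ha hb hb0 hbd hbd1 hd0 hd1 ε hε nst hnstε
    nst y1 hy1pos hy1b (fun j _ => by omega) h3
  obtain ⟨c, hc⟩ := hL'
  exact ⟨L', c, hL'0, hL'ε, hc⟩

end CWIA

/-- For the rigid rotation `T₁(y) = y + α` and the double rotation
`T₂ = T_{α,β,δ}` with `α, β` irrational, `0 < β < min(δ, 1-δ)`, `δ ∈ (0,1)`: for every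
nonempty open arc `A ⊆ S` there is a finite itinerary `J` with `T_J(S) ⊆ A`. -/
theorem circle_word_into_arc (a b dl : ℝ) (ha : Irrational a) (ha0 : 0 < a) (ha1 : a < 1)
    (hb : Irrational b) (hb0 : 0 < b) (hb1 : b < min dl (1 - dl))
    (hd0 : 0 < dl) (hd1 : dl < 1) :
    ∀ A : Set (AddCircle (1 : ℝ)), IsOpen A → IsConnected A →
      ∃ J : List Bool, Set.range (applyWord a b dl J) ⊆ A := by
  intro A hAopen hAconn
  obtain ⟨q, hq⟩ := hAconn.nonempty
  have hbd : b < dl := lt_of_lt_of_le hb1 (min_le_left _ _)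
  have hbd1 : b < 1 - dl := lt_of_lt_of_le hb1 (min_le_right _ _)
  have hcont : Continuous CWIA.ιc := AddCircle.continuous_mk' 1
  have hpre : IsOpen (CWIA.ιc ⁻¹' A) := hAopen.preimage hcont
  obtain ⟨z₀, hz₀mem, hz₀⟩ := CWIA.coe_surj q
  have hz₀A : z₀ ∈ CWIA.ιc ⁻¹' A := by
    simp only [Set.mem_preimage]
    rw [hz₀]
    exact hq
  obtain ⟨η, hη0, hball⟩ := Metric.isOpen_iff.1 hpre z₀ hz₀A
  rw [Real.ball_eq_Ioo] at hball
  obtain ⟨L, c, hL0, hLε, hgood⟩ :=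
    CWIA.descent ha hb hb0 hbd hbd1 hd0 hd1 (η/2) (by positivity)
  obtain ⟨w, hw1, hw2, hw⟩ := CWIA.g1_shift ha ⟨c, hgood⟩ (z₀ - η) (z₀ + η - L)
    (by linarith)
  obtain ⟨J, hJ⟩ := hw
  refine ⟨J, hJ.trans ?_⟩
  rintro z ⟨x, hx, rfl⟩
  simp only [Set.mem_Icc] at hx
  have hxI : x ∈ Set.Ioo (z₀ - η) (z₀ + η) :=
    ⟨by linarith [hx.1], by linarith [hx.2]⟩
  exact hball hxI
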